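/- Let q₁, q₂, p₁, p₂ be holomorphic functions on a connected open set U ⊆ ℂ∖{0,1} satisfying Hamilton's equations q₁′ = ∂H/∂p₁, q₂′ = ∂H/∂p₂, p₁′ = −∂H/∂q₁, p₂′ = −∂H/∂q₂ (partial derivatives of H(t;q₁,q₂,p₁,p₂) in the indicated variable, evaluated along the solution), and suppose p₁(t) ≠ 0 for all t ∈ U. Then P₁ := 1/p₁ and P₂ := p₂/p₁ together with q₁, q₂ satisfy the W₀₁-system (E1)–(E4) on U. -/

import Mathlib

/-- The Painlevé VI-type Hamiltonian `H_VI(a,b,c,d;q,p)`. -/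
noncomputable def Hvi (t a b c d q p : ℂ) : ℂ :=
  (q * (q - 1) * (q - t) * p ^ 2 -
      (a * (q - 1) * (q - t) + b * q * (q - t) + (c - 1) * q * (q - 1)) * p + d * q) /
    (t * (t - 1))

/-- The Hamiltonian of the fourth-order FST Painlevé system. -/
noncomputable def HFST (α₀ α₁ α₂ α₃ α₄ α₅ η t q₁ q₂ p₁ p₂ : ℂ) : ℂ :=
  Hvi t (α₃ + α₅ - η) α₀ (α₂ + α₄) (α₁ * η) q₁ p₁ +
    Hvi t (α₁ + α₅ - η) (α₀ + α₂) α₄ (α₃ * η) q₂ p₂ +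
    (q₁ - 1) * (q₂ - t) * ((q₁ * p₁ + α₁) * p₂ + (q₂ * p₂ + α₃) * p₁) / (t * (t - 1))

private lemma deriv_cubic (A B C E p : ℂ) (f : ℂ → ℂ)
    (hf : ∀ x, f x = (A * x ^ 3 + B * x ^ 2 + C * x) / E + f 0) :
    deriv f p = (3 * A * p ^ 2 + 2 * B * p + C) / E := by
  have h : f = fun x => (A * x ^ 3 + B * x ^ 2 + C * x) / E + f 0 := funext hf
  have h1 : HasDerivAt (fun x : ℂ => A * x ^ 3 + B * x ^ 2 + C * x)
      (3 * A * p ^ 2 + 2 * B * p + C) p := by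
    have := (((hasDerivAt_pow 3 p).const_mul A).add
      ((hasDerivAt_pow 2 p).const_mul B)).add ((hasDerivAt_id p).const_mul C)
    exact this.congr_deriv (by push_cast; ring)
  rw [h]
  exact ((h1.div_const E).add_const _).deriv

set_option maxHeartbeats 1000000 in
/-- If `(q₁,q₂,p₁,p₂)` is a holomorphic solution of the FST Hamiltonian system on a
connected open set `U ⊆ ℂ∖{0,1}` with `p₁` nowhere vanishing on `U`, then
`(q₁, q₂, P₁, P₂) = (q₁, q₂, 1/p₁, p₂/p₁)` satisfies the `W₀₁`-system (E1)–(E4)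
on `U`. -/
theorem W01_system_of_hamiltonian_solution
    (α₀ α₁ α₂ α₃ α₄ α₅ η : ℂ) (hsum : α₀ + α₁ + α₂ + α₃ + α₄ + α₅ = 1)
    (U : Set ℂ) (hUopen : IsOpen U) (hUconn : IsConnected U)
    (hUsub : ∀ t ∈ U, t ≠ 0 ∧ t ≠ 1)
    (q₁ q₂ p₁ p₂ : ℂ → ℂ)
    (hq₁ : DifferentiableOn ℂ q₁ U) (hq₂ : DifferentiableOn ℂ q₂ U)
    (hp₁ : DifferentiableOn ℂ p₁ U) (hp₂ : DifferentiableOn ℂ p₂ U)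
    (ham₁ : ∀ t ∈ U, deriv q₁ t =
      deriv (fun x => HFST α₀ α₁ α₂ α₃ α₄ α₅ η t (q₁ t) (q₂ t) x (p₂ t)) (p₁ t))
    (ham₂ : ∀ t ∈ U, deriv q₂ t =
      deriv (fun x => HFST α₀ α₁ α₂ α₃ α₄ α₅ η t (q₁ t) (q₂ t) (p₁ t) x) (p₂ t))
    (ham₃ : ∀ t ∈ U, deriv p₁ t =
      -deriv (fun x => HFST α₀ α₁ α₂ α₃ α₄ α₅ η t x (q₂ t) (p₁ t) (p₂ t)) (q₁ t))
    (ham₄ : ∀ t ∈ U, deriv p₂ t =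
      -deriv (fun x => HFST α₀ α₁ α₂ α₃ α₄ α₅ η t (q₁ t) x (p₁ t) (p₂ t)) (q₂ t))
    (hp₁ne : ∀ t ∈ U, p₁ t ≠ 0) :
    ∀ t ∈ U,
      -- (E1)
      (t * (t - 1) * deriv q₁ t =
        (α₁ + η) * (q₁ t) ^ 2 + α₃ * (q₁ t) * (q₂ t) +
          ((α₀ + α₅ - η) * t - (α₀ + α₁ + η)) * (q₁ t) - α₃ * (q₂ t) - (α₅ - η) * t +
          ((q₁ t - 1) * (q₁ t + q₂ t) * (q₂ t - t) * (p₂ t / p₁ t) +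
            2 * (q₁ t) * (q₁ t - 1) * (q₁ t - t)) / (p₁ t)⁻¹) ∧
      -- (E2)
      (t * (t - 1) * deriv q₂ t =
        α₁ * (q₁ t) * (q₂ t) + (α₃ + η) * (q₂ t) ^ 2 - α₁ * t * (q₁ t) -
          ((α₃ + α₄ + η - 1) * t - (α₄ + α₅ - η - 1)) * (q₂ t) - (α₅ - η) * t +
          (2 * (q₂ t) * (q₂ t - 1) * (q₂ t - t) * (p₂ t / p₁ t) +
            (q₁ t - 1) * (q₁ t + q₂ t) * (q₂ t - t)) / (p₁ t)⁻¹) ∧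
      -- (E3)
      (t * (t - 1) * deriv (fun s => (p₁ s)⁻¹) t =
        α₁ * η * ((p₁ t)⁻¹) ^ 2 +
          (2 * (α₁ + η) * (q₁ t) + α₃ * (q₂ t) + (α₀ + α₅ - η) * t - (α₀ + α₁ + η)) *
            (p₁ t)⁻¹ +
          α₁ * (q₂ t - t) * (p₁ t)⁻¹ * (p₂ t / p₁ t) +
          (2 * (q₁ t) + q₂ t - 1) * (q₂ t - t) * (p₂ t / p₁ t) +
          3 * (q₁ t) ^ 2 - 2 * (t + 1) * (q₁ t) + t) ∧
      -- (E4)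
      (t * (t - 1) * deriv (fun s => p₂ s / p₁ s) t =
        η * (α₁ * (p₂ t / p₁ t) - α₃) * (p₁ t)⁻¹ +
          α₁ * (q₂ t - t) * (p₂ t / p₁ t) ^ 2 +
          ((α₁ + 2 * η) * (q₁ t) - (α₃ + 2 * η) * (q₂ t) - (α₁ + α₂) * t + α₂ + α₃) *
            (p₂ t / p₁ t) -
          α₃ * (q₁ t - 1) +
          ((2 * (q₁ t) * (q₂ t) - 2 * (q₂ t) ^ 2 - 2 * t * (q₁ t) + (t + 1) * (q₂ t)) *
              (p₂ t / p₁ t) ^ 2 +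
            (2 * (q₁ t) ^ 2 - 2 * (q₁ t) * (q₂ t) - (t + 1) * (q₁ t) + 2 * (q₂ t)) *
              (p₂ t / p₁ t)) / (p₁ t)⁻¹) := by
  have h5 : α₅ = 1 - α₀ - α₁ - α₂ - α₃ - α₄ := by linear_combination hsum
  subst h5
  intro t ht
  obtain ⟨ht0, ht1⟩ := hUsub t ht
  have ht1' : t - 1 ≠ 0 := sub_ne_zero.mpr ht1
  have hpt : p₁ t ≠ 0 := hp₁ne t ht
  have hmem := hUopen.mem_nhds ht
  have hp1d : DifferentiableAt ℂ p₁ t := hp₁.differentiableAt hmem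
  have hp2d : DifferentiableAt ℂ p₂ t := hp₂.differentiableAt hmem
  have hdq1 : deriv q₁ t = (3 * 0 * (p₁ t) ^ 2 + 2 * ((q₁ t) * ((q₁ t) - 1) * ((q₁ t) - t)) * (p₁ t) + (-((α₃ + (1 - α₀ - α₁ - α₂ - α₃ - α₄) - η) * ((q₁ t) - 1) * ((q₁ t) - t) + α₀ * (q₁ t) * ((q₁ t) - t) + (α₂ + α₄ - 1) * (q₁ t) * ((q₁ t) - 1)) + ((q₁ t) - 1) * ((q₂ t) - t) * (((q₁ t) + (q₂ t)) * (p₂ t) + α₃))) / (t * (t - 1)) :=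
    (ham₁ t ht).trans (deriv_cubic 0 _ _ _ _ _ (fun x => by simp only [HFST, Hvi]; ring))
  have hdq2 : deriv q₂ t = (3 * 0 * (p₂ t) ^ 2 + 2 * ((q₂ t) * ((q₂ t) - 1) * ((q₂ t) - t)) * (p₂ t) + (-((α₁ + (1 - α₀ - α₁ - α₂ - α₃ - α₄) - η) * ((q₂ t) - 1) * ((q₂ t) - t) + (α₀ + α₂) * (q₂ t) * ((q₂ t) - t) + (α₄ - 1) * (q₂ t) * ((q₂ t) - 1)) + ((q₁ t) - 1) * ((q₂ t) - t) * (((q₁ t) + (q₂ t)) * (p₁ t) + α₁))) / (t * (t - 1)) :=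
    (ham₂ t ht).trans (deriv_cubic 0 _ _ _ _ _ (fun x => by simp only [HFST, Hvi]; ring))
  have hdp1 : deriv p₁ t =
      -((3 * ((p₁ t) ^ 2) * (q₁ t) ^ 2 + 2 * (-(t + 1) * (p₁ t) ^ 2 - ((α₃ + (1 - α₀ - α₁ - α₂ - α₃ - α₄) - η) + α₀ + (α₂ + α₄) - 1) * (p₁ t) + ((q₂ t) - t) * (p₁ t) * (p₂ t)) * (q₁ t) + (t * (p₁ t) ^ 2 + ((t + 1) * (α₃ + (1 - α₀ - α₁ - α₂ - α₃ - α₄) - η) + t * α₀ + (α₂ + α₄ - 1)) * (p₁ t) + α₁ * η + ((q₂ t) - t) * ((α₁ - (p₁ t)) * (p₂ t) + (q₂ t) * (p₁ t) * (p₂ t) + α₃ * (p₁ t)))) / (t * (t - 1))) := by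
    rw [ham₃ t ht, deriv_cubic ((p₁ t) ^ 2) (-(t + 1) * (p₁ t) ^ 2 - ((α₃ + (1 - α₀ - α₁ - α₂ - α₃ - α₄) - η) + α₀ + (α₂ + α₄) - 1) * (p₁ t) + ((q₂ t) - t) * (p₁ t) * (p₂ t)) (t * (p₁ t) ^ 2 + ((t + 1) * (α₃ + (1 - α₀ - α₁ - α₂ - α₃ - α₄) - η) + t * α₀ + (α₂ + α₄ - 1)) * (p₁ t) + α₁ * η + ((q₂ t) - t) * ((α₁ - (p₁ t)) * (p₂ t) + (q₂ t) * (p₁ t) * (p₂ t) + α₃ * (p₁ t))) (t * (t - 1)) (q₁ t) _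
      (fun x => by simp only [HFST, Hvi]; ring)]
  have hdp2 : deriv p₂ t =
      -((3 * ((p₂ t) ^ 2) * (q₂ t) ^ 2 + 2 * (-(t + 1) * (p₂ t) ^ 2 - ((α₁ + (1 - α₀ - α₁ - α₂ - α₃ - α₄) - η) + (α₀ + α₂) + α₄ - 1) * (p₂ t) + ((q₁ t) - 1) * (p₁ t) * (p₂ t)) * (q₂ t) + (t * (p₂ t) ^ 2 + ((t + 1) * (α₁ + (1 - α₀ - α₁ - α₂ - α₃ - α₄) - η) + t * (α₀ + α₂) + (α₄ - 1)) * (p₂ t) + α₃ * η + ((q₁ t) - 1) * (((q₁ t) * (p₁ t) + α₁) * (p₂ t) + α₃ * (p₁ t) - t * (p₁ t) * (p₂ t)))) / (t * (t - 1))) := by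
    rw [ham₄ t ht, deriv_cubic ((p₂ t) ^ 2) (-(t + 1) * (p₂ t) ^ 2 - ((α₁ + (1 - α₀ - α₁ - α₂ - α₃ - α₄) - η) + (α₀ + α₂) + α₄ - 1) * (p₂ t) + ((q₁ t) - 1) * (p₁ t) * (p₂ t)) (t * (p₂ t) ^ 2 + ((t + 1) * (α₁ + (1 - α₀ - α₁ - α₂ - α₃ - α₄) - η) + t * (α₀ + α₂) + (α₄ - 1)) * (p₂ t) + α₃ * η + ((q₁ t) - 1) * (((q₁ t) * (p₁ t) + α₁) * (p₂ t) + α₃ * (p₁ t) - t * (p₁ t) * (p₂ t))) (t * (t - 1)) (q₂ t) _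
      (fun x => by simp only [HFST, Hvi]; ring)]
  have hdinv : deriv (fun s => (p₁ s)⁻¹) t = -(deriv p₁ t) / p₁ t ^ 2 :=
    (hp1d.hasDerivAt.inv hpt).deriv
  have hddiv : deriv (fun s => p₂ s / p₁ s) t =
      (deriv p₂ t * p₁ t - p₂ t * deriv p₁ t) / p₁ t ^ 2 :=
    (hp2d.hasDerivAt.div hp1d.hasDerivAt hpt).deriv
  have hpoly1 : t * (t - 1) * deriv p₁ t = -(3 * ((p₁ t) ^ 2) * (q₁ t) ^ 2 + 2 * (-(t + 1) * (p₁ t) ^ 2 - ((α₃ + (1 - α₀ - α₁ - α₂ - α₃ - α₄) - η) + α₀ + (α₂ + α₄) - 1) * (p₁ t) + ((q₂ t) - t) * (p₁ t) * (p₂ t)) * (q₁ t) + (t * (p₁ t) ^ 2 + ((t + 1) * (α₃ + (1 - α₀ - α₁ - α₂ - α₃ - α₄) - η) + t * α₀ + (α₂ + α₄ - 1)) * (p₁ t) + α₁ * η + ((q₂ t) - t) * ((α₁ - (p₁ t)) * (p₂ t) + (q₂ t) * (p₁ t) * (p₂ t) + α₃ * (p₁ t)))) := by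
    rw [hdp1]; field_simp
  have hpoly2 : t * (t - 1) * deriv p₂ t = -(3 * ((p₂ t) ^ 2) * (q₂ t) ^ 2 + 2 * (-(t + 1) * (p₂ t) ^ 2 - ((α₁ + (1 - α₀ - α₁ - α₂ - α₃ - α₄) - η) + (α₀ + α₂) + α₄ - 1) * (p₂ t) + ((q₁ t) - 1) * (p₁ t) * (p₂ t)) * (q₂ t) + (t * (p₂ t) ^ 2 + ((t + 1) * (α₁ + (1 - α₀ - α₁ - α₂ - α₃ - α₄) - η) + t * (α₀ + α₂) + (α₄ - 1)) * (p₂ t) + α₃ * η + ((q₁ t) - 1) * (((q₁ t) * (p₁ t) + α₁) * (p₂ t) + α₃ * (p₁ t) - t * (p₁ t) * (p₂ t)))) := by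
    rw [hdp2]; field_simp
  refine ⟨?_, ?_, ?_, ?_⟩
  · rw [hdq1]; field_simp; ring
  · rw [hdq2]; field_simp; ring
  · rw [hdinv, hdp1]; field_simp [hpt, ht0, ht1']; ring
  · have hc : p₁ t * (p₁ t)⁻¹ = 1 := mul_inv_cancel₀ hpt
    refine mul_left_cancel₀ (pow_ne_zero 2 hpt) ?_
    rw [hddiv]
    simp only [div_inv_eq_mul]
    linear_combination p₁ t * hpoly2 - p₂ t * hpoly1 + (-(p₂ t) * (α₁) * (η) + (p₁ t) * (α₃) * (η) - (p₁ t) * (p₂ t) * (α₃) - (p₁ t) * (p₂ t) * (α₂) - (p₁ t) * (p₂ t) * ((p₁ t)⁻¹) * (α₁) * (η) - (q₂ t) * (p₂ t) ^ 2 * (α₁) + 2 * (q₂ t) * (p₁ t) * (p₂ t) * (η) + (q₂ t) * (p₁ t) * (p₂ t) * (α₃) - (q₂ t) * (p₁ t) * (p₂ t) ^ 2 - (q₂ t) * (p₁ t) * (p₂ t) ^ 2 * ((p₁ t)⁻¹) * (α₁) - 2 * (q₂ t) * (p₁ t) ^ 2 * (p₂ t) - (q₂ t) * (p₁ t) ^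 2 * (p₂ t) ^ 2 * ((p₁ t)⁻¹) + 2 * (q₂ t) ^ 2 * (p₁ t) * (p₂ t) ^ 2 + 2 * (q₂ t) ^ 2 * (p₁ t) ^ 2 * (p₂ t) ^ 2 * ((p₁ t)⁻¹) - 2 * (q₁ t) * (p₁ t) * (p₂ t) * (η) - (q₁ t) * (p₁ t) * (p₂ t) * (α₁) + (q₁ t) * (p₁ t) ^ 2 * (p₂ t) - 2 * (q₁ t) * (q₂ t) * (p₁ t) * (p₂ t) ^ 2 + 2 * (q₁ t) * (q₂ t) * (p₁ t) ^ 2 * (p₂ t) - 2 * (q₁ t) * (q₂ t) * (p₁ t) ^ 2 * (p₂ t) ^ 2 * ((p₁ t)⁻¹) - 2 * (q₁ t) ^ 2 * (p₁ t) ^ 2 * (p₂ t) + (t) * (p₂ t) * (deriv p₁ t) + (t) * (p₂ t) ^ 2 * (α₁) - (t) * (p₁ t) * (deriv p₂ t) + (t) * (p₁ t) * (p₂ t) * (α₂) + (t) * (p₁ t) * (p₂ t) * (α₁) + (t) * (p₁ t) * (p₂ t) * ((p₁ t)⁻¹) * (deriv p₁ t) + (t) * (p₁ t) * (p₂ t)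 ^ 2 * ((p₁ t)⁻¹) * (α₁) - (t) * (p₁ t) ^ 2 * ((p₁ t)⁻¹) * (deriv p₂ t) - (t) * (q₂ t) * (p₁ t) * (p₂ t) ^ 2 - (t) * (q₂ t) * (p₁ t) ^ 2 * (p₂ t) ^ 2 * ((p₁ t)⁻¹) + 2 * (t) * (q₁ t) * (p₁ t) * (p₂ t) ^ 2 + (t) * (q₁ t) * (p₁ t) ^ 2 * (p₂ t) + 2 * (t) * (q₁ t) * (p₁ t) ^ 2 * (p₂ t) ^ 2 * ((p₁ t)⁻¹) - (t) ^ 2 * (p₂ t) * (deriv p₁ t) + (t) ^ 2 * (p₁ t) * (deriv p₂ t) - (t) ^ 2 * (p₁ t) * (p₂ t) * ((p₁ t)⁻¹) * (deriv p₁ t) + (t) ^ 2 * (p₁ t) ^ 2 * ((p₁ t)⁻¹) * (deriv p₂ t)) * hc
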